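/- arXiv:2402.18210 — 2 statements merged into one kernel-verified Lean document; each statement's English description precedes it below -/
import Mathlib

section
/- Let k be a field of characteristic zero, V a finite-dimensional k-vector space with basis of linear forms β₁,…,β_d of the dual space, and let r ≥ 2. If β is a nonzero linear form on V such that the r-th power β^r (as an element of the degree-r part of the symmetric algebra of the dual space) lies in the k-span of β₁^r,…,β_d^r, then β is a scalar multiple of one of the β_i. -/
open Polynomial in
/-- Key one-variable computation: if `(a*s+b)^r = c₁*s^r + c₂` for all `s` with `a ≠ 0`,
`2 ≤ r`, then `b = 0`. -/
lemma aux_poly {k : Type*} [Field k] [CharZero k] {a b c₁ c₂ : k} {r : ℕ} (hr : 2 ≤ r)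
    (ha : a ≠ 0) (h : ∀ s : k, (a * s + b) ^ r = c₁ * s ^ r + c₂) : b = 0 := by
  have hpoly : (C a * X + C b) ^ r = C c₁ * X ^ r + C c₂ := by
    apply Polynomial.funext
    intro s
    simpa using h s
  have hfact : (C a * X + C b) = C a * (X + C (b / a)) := by
    rw [mul_add, ← C_mul, mul_div_cancel₀ _ ha]
  have hco := congrArg (fun p => Polynomial.coeff p (r - 1)) hpoly
  simp only [hfact, mul_pow, ← C_pow, coeff_C_mul, coeff_X_add_C_pow, coeff_add,
    coeff_X_pow, coeff_C] at hco
  have h1 : r - 1 ≠ r := by omega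
  have h2 : r - 1 ≠ 0 := by omega
  rw [if_neg h1, if_neg h2, mul_zero, add_zero, Nat.sub_sub_self (by omega : 1 ≤ r)] at hco
  have hchoose : (r.choose (r - 1) : k) = (r : k) := by
    rw [Nat.choose_symm (by omega : 1 ≤ r), Nat.choose_one_right]
  rw [pow_one, hchoose] at hco
  have han : (a : k) ^ r ≠ 0 := pow_ne_zero _ ha
  have hrn : (r : k) ≠ 0 := Nat.cast_ne_zero.2 (by omega)
  have hba : b / a = 0 := by
    rcases mul_eq_zero.1 hco with h | h
    · exact absurd h han
    · rcases mul_eq_zero.1 h with h | h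
      · exact h
      · exact absurd h hrn
  exact (div_eq_zero_iff.1 hba).resolve_right ha

/-- If `β^r` (as a polynomial function, i.e. in the symmetric algebra of the dual,
viewed inside functions `V → k` which is injective in characteristic zero) lies in the span of
`β₁^r, …, β_d^r` for a basis `β₁, …, β_d` of the dual space and `r ≥ 2`, then `β` is a scalar
multiple of some `β_i`. -/
theorem stmt0 {k V : Type*} [Field k] [CharZero k] [AddCommGroup V] [Module k V]
    [FiniteDimensional k V] {d : ℕ} (B : Module.Basis (Fin d) k (Module.Dual k V))
    (r : ℕ) (hr : 2 ≤ r) (β : Module.Dual k V) (hβ : β ≠ 0)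
    (hspan : (fun v => (β v) ^ r) ∈
      Submodule.span k (Set.range fun i : Fin d => (fun v => (B i v) ^ r : V → k))) :
    ∃ (i : Fin d) (c : k), β = c • B i := by
  classical
  obtain ⟨c, hc⟩ := (Submodule.mem_span_range_iff_exists_fun k).1 hspan
  -- the "predual" vectors
  set v : Fin d → V := fun m => (Module.evalEquiv k V).symm (B.dualBasis m) with hv
  have hBv : ∀ m n : Fin d, B m (v n) = if m = n then 1 else 0 := by
    intro m n
    rw [hv]
    rw [Module.apply_evalEquiv_symm_apply, Module.Basis.dualBasis_apply_self]
  have hβv : ∀ n : Fin d, β (v n) = B.repr β n := by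
    intro n
    rw [hv, Module.apply_evalEquiv_symm_apply, Module.Basis.dualBasis_apply]
  obtain ⟨i, hi⟩ : ∃ i, B.repr β i ≠ 0 := by
    by_contra h
    push_neg at h
    exact hβ (B.forall_coord_eq_zero_iff.mp fun m => by rw [B.coord_apply]; exact h m)
  have key : ∀ j, j ≠ i → B.repr β j = 0 := by
    intro j hj
    have heval : ∀ s : k, (B.repr β i * s + B.repr β j) ^ r = c i * s ^ r + c j := by
      intro s
      have := congrFun hc (s • v i + v j)
      simp only [Finset.sum_apply, Pi.smul_apply, smul_eq_mul, map_add, map_smul] at this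
      rw [hβv i, hβv j] at this
      have hsum : ∑ m : Fin d, c m * (s * B m (v i) + B m (v j)) ^ r
          = c i * s ^ r + c j := by
        rw [← Finset.sum_subset (Finset.subset_univ ({i, j} : Finset (Fin d)))
          (fun m _ hm => ?_), Finset.sum_pair (Ne.symm hj)]
        · rw [hBv i i, hBv j j, hBv i j, hBv j i,
            if_pos rfl, if_pos rfl, if_neg hj, if_neg (Ne.symm hj)]
          simp
        · simp only [Finset.mem_insert, Finset.mem_singleton, not_or] at hm
          rw [hBv m i, hBv m j, if_neg hm.1, if_neg hm.2]
          simp [zero_pow (by omega : r ≠ 0)]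
      rw [hsum] at this
      rw [mul_comm]
      exact this.symm
    exact aux_poly hr hi heval
  refine ⟨i, B.repr β i, ?_⟩
  conv_lhs => rw [← B.sum_repr β]
  rw [Finset.sum_eq_single i (fun m _ hm => by rw [key m hm, zero_smul])
    (fun h => absurd (Finset.mem_univ i) h)]
end

section
/- Let ℓ ≥ 1, κ : ℤ → ℂ ℓ-periodic with κ(0)=0, and D the operator on ℂ[x,x⁻¹] given by D(xⁱ) = (i + ℓκ(i))x^{i−1}. Then for every integer n ≥ 0, D^ℓ(x^{ℓ(n+1)}) = (∏_{i=0}^{ℓ−1} (ℓ(n+1) − i + ℓ·κ(−i))) · x^{ℓn}. Equivalently, the b-function of f = x^ℓ is b(s) = ∏_{j=1}^{ℓ} ℓ·(s + j/ℓ + κ(j)). -/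
open LaurentPolynomial

lemma dunkl_pow (ℓ : ℕ) (κ : ℤ → ℂ)
    (D : Module.End ℂ (LaurentPolynomial ℂ))
    (hD : ∀ i : ℤ, D (T i) = ((i : ℂ) + ℓ * κ i) • T (i - 1)) :
    ∀ k : ℕ, ∀ m : ℤ,
      (D ^ k) (T m) =
        (∏ i ∈ Finset.range k, ((m : ℂ) - i + ℓ * κ (m - i))) • T (m - k) := by
  intro k
  induction k with
  | zero => intro m; simp
  | succ k ih =>
    intro m
    rw [pow_succ, Module.End.mul_apply, hD, map_smul, ih,
      Finset.prod_range_succ', smul_smul]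
    congr 1
    · rw [mul_comm]
      congr 1
      · apply Finset.prod_congr rfl
        intro i _
        push_cast
        ring_nf
      · push_cast; ring_nf
    · congr 1; push_cast; ring

/-- The `b`-function of `f = x^ℓ` for the rank-one Dunkl operator `D` of `ℤ/ℓℤ`:
`D^ℓ(x^{ℓ(n+1)}) = (∏_{i=0}^{ℓ−1} (ℓ(n+1) − i + ℓκ(−i)))·x^{ℓn}`, and the product equals
`∏_{j=1}^{ℓ} ℓ·(n + j/ℓ + κ(j))`. -/
theorem stmt2 (ℓ : ℕ) (hℓ : 1 ≤ ℓ) (κ : ℤ → ℂ)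
    (hper : ∀ i : ℤ, κ (i + ℓ) = κ i) (h0 : κ 0 = 0)
    (D : Module.End ℂ (LaurentPolynomial ℂ))
    (hD : ∀ i : ℤ, D (T i) = ((i : ℂ) + ℓ * κ i) • T (i - 1)) :
    ∀ n : ℕ,
      (D ^ ℓ) (T ((ℓ : ℤ) * (n + 1))) =
        (∏ i ∈ Finset.range ℓ, ((ℓ : ℂ) * (n + 1) - i + ℓ * κ (-(i : ℤ)))) • T ((ℓ : ℤ) * n) ∧
      (∏ i ∈ Finset.range ℓ, ((ℓ : ℂ) * (n + 1) - i + ℓ * κ (-(i : ℤ)))) =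
        ∏ j ∈ Finset.Icc 1 ℓ, (ℓ : ℂ) * ((n : ℂ) + j / ℓ + κ j) := by
  have hper' : ∀ (x : ℤ) (t : ℕ), κ (x + ℓ * t) = κ x := by
    intro x t
    induction t with
    | zero => simp
    | succ t ih =>
      push_cast
      rw [show x + (ℓ : ℤ) * ((t : ℤ) + 1) = (x + ℓ * t) + ℓ from by ring, hper, ih]
  have hℓC : (ℓ : ℂ) ≠ 0 := Nat.cast_ne_zero.mpr (by omega)
  intro n
  constructor
  · rw [dunkl_pow ℓ κ D hD ℓ ((ℓ : ℤ) * (n + 1))]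
    congr 1
    · apply Finset.prod_congr rfl
      intro i _
      have h := hper' (-(i : ℤ)) (n + 1)
      push_cast at h
      rw [show (ℓ : ℤ) * ((n : ℤ) + 1) - i = -i + ℓ * (n + 1) from by ring, h]
      push_cast; ring_nf
    · congr 1; push_cast; ring
  · rw [show Finset.Icc 1 ℓ = Finset.Ico 1 (ℓ + 1) by rfl,
      Finset.prod_Ico_eq_prod_range]
    simp only [Nat.add_sub_cancel]
    rw [← Finset.prod_range_reflect]
    apply Finset.prod_congr rfl
    intro j hj
    rw [Finset.mem_range] at hj
    have hz : ((ℓ - 1 - j : ℕ) : ℤ) = (ℓ : ℤ) - 1 - j := by omega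
    have hc : ((ℓ - 1 - j : ℕ) : ℂ) = (ℓ : ℂ) - 1 - j := by
      have := congrArg (Int.cast : ℤ → ℂ) hz
      push_cast at this
      exact this
    rw [hc, hz]
    have h2 : κ (-((ℓ : ℤ) - 1 - j)) = κ (1 + j) := by
      have := hper (1 + (j : ℤ) - ℓ)
      rw [show (1 + (j : ℤ) - ℓ) + ℓ = 1 + j from by ring] at this
      rw [show -((ℓ : ℤ) - 1 - j) = 1 + j - ℓ from by ring, this]
    rw [h2]
    push_cast
    field_simp
    ring
end
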